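/- arXiv:1509.09168 — 2 statements merged into one kernel-verified Lean document; each statement's English description precedes it below -/
import Mathlib

section
/- Let r ≥ 2 and let G be a graph such that every set of r+1 vertices of G has a common neighbor. Then for every r-edge-coloring of G, the vertex set of G can be covered by at most r² monochromatic connected subgraphs, i.e., tc_r(G) ≤ r². -/
open SimpleGraph

/-- The subgraph of `G` consisting of edges of color `i` under edge-coloring `c`. -/
def monoSub {V : Type*} (G : SimpleGraph V) {r : ℕ} (c : Sym2 V → Fin r) (i : Fin r) :
    SimpleGraph V where
  Adj u v := G.Adj u v ∧ c s(u, v) = i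
  symm := ⟨fun u v h => ⟨h.1.symm, by rw [Sym2.eq_swap]; exact h.2⟩⟩
  loopless := ⟨fun u h => G.irrefl h.1⟩

/-- `V(G)` can be covered by at most `s` monochromatic connected subgraphs. -/
def HasMonoCover {V : Type*} (G : SimpleGraph V) {r : ℕ} (c : Sym2 V → Fin r) (s : ℕ) : Prop :=
  ∃ t : ℕ, t ≤ s ∧ ∃ (f : Fin t → Set V) (col : Fin t → Fin r),
    (∀ j, ((monoSub G c (col j)).induce (f j)).Connected) ∧ (⋃ j, f j) = Set.univ

/-- `V(G)` can be partitioned into at most `s` monochromatic connected subgraphs. -/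
def HasMonoPartition {V : Type*} (G : SimpleGraph V) {r : ℕ} (c : Sym2 V → Fin r) (s : ℕ) : Prop :=
  ∃ t : ℕ, t ≤ s ∧ ∃ (f : Fin t → Set V) (col : Fin t → Fin r),
    (∀ j, ((monoSub G c (col j)).induce (f j)).Connected) ∧ (⋃ j, f j) = Set.univ ∧
    ∀ j j', j ≠ j' → Disjoint (f j) (f j')

/-- The independence number of `G`. -/
noncomputable def indepNum' {V : Type*} (G : SimpleGraph V) : ℕ :=
  sSup {k | ∃ s : Finset V, s.card = k ∧ ∀ u ∈ s, ∀ v ∈ s, u ≠ v → ¬ G.Adj u v}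

lemma reach_induce_connected {V : Type*} (H : SimpleGraph V) (u : V) :
    (H.induce {v | H.Reachable u v}).Connected := by
  rw [connected_iff]
  refine ⟨?_, ⟨⟨u, Reachable.refl u⟩⟩⟩
  rintro ⟨a, ha⟩ ⟨b, hb⟩
  have key : ∀ (a b : V) (p : H.Walk a b) (ha : H.Reachable u a) (hb : H.Reachable u b),
      (H.induce {v | H.Reachable u v}).Reachable ⟨a, ha⟩ ⟨b, hb⟩ := by
    intro a b p
    induction p with
    | nil => intro _ _; rfl
    | cons h q ih =>
      intro ha hb
      have hw : H.Reachable u _ := ha.trans h.toWalk.reachable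
      exact (Reachable.trans (Adj.reachable (by exact h)) (ih hw hb))
  obtain ⟨p⟩ := ha.symm.trans hb
  exact key a b p ha hb


/-- If every r+1 vertices of G have a common neighbor, then tc_r(G) ≤ r². -/
theorem stmt3 {V : Type*} [Fintype V] (r : ℕ) (hr : 2 ≤ r) (G : SimpleGraph V)
    (hcn : ∀ S : Finset V, S.card = r + 1 → ∃ w, ∀ v ∈ S, G.Adj w v)
    (c : Sym2 V → Fin r) :
    HasMonoCover G c (r ^ 2) := by
  classical
  set Valid : ∀ m : ℕ, (Fin m → V) → Prop :=
    fun m us => ∀ k l : Fin m, k < l → ∀ i, ¬ (monoSub G c i).Reachable (us k) (us l) with hValid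
  have i0 : Fin r := ⟨0, by omega⟩
  -- no valid sequence of length r+1
  have noValid : ¬ ∃ us : Fin (r + 1) → V, Valid (r + 1) us := by
    rintro ⟨us, hv⟩
    have hinj : Function.Injective us := by
      intro a b hab
      by_contra hne
      rcases lt_or_gt_of_ne hne with h | h
      · exact hv a b h i0 (by rw [hab])
      · exact hv b a h i0 (by rw [hab])
    have hcard : (Finset.univ.image us).card = r + 1 := by
      rw [Finset.card_image_of_injective _ hinj, Finset.card_univ, Fintype.card_fin]
    obtain ⟨w, hw⟩ := hcn _ hcard
    have hwadj : ∀ a : Fin (r + 1), G.Adj w (us a) := fun a =>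
      hw (us a) (Finset.mem_image_of_mem us (Finset.mem_univ a))
    obtain ⟨a, b, hne, heq⟩ :=
      Fintype.exists_ne_map_eq_of_card_lt (fun a : Fin (r + 1) => c s(w, us a)) (by simp)
    -- wlog a < b
    rcases lt_or_gt_of_ne hne with h | h
    · have h1 : (monoSub G c (c s(w, us a))).Adj w (us a) := ⟨hwadj a, rfl⟩
      have h2 : (monoSub G c (c s(w, us a))).Adj w (us b) := ⟨hwadj b, heq.symm⟩
      exact hv a b h _ (h1.symm.reachable.trans h2.reachable)
    · have h1 : (monoSub G c (c s(w, us a))).Adj w (us b) := ⟨hwadj b, heq.symm⟩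
      have h2 : (monoSub G c (c s(w, us a))).Adj w (us a) := ⟨hwadj a, rfl⟩
      exact hv b a h _ (h1.symm.reachable.trans h2.reachable)
  set Q : ℕ → Prop := fun m => ∃ us : Fin m → V, Valid m us with hQ
  have Q0 : Q 0 := ⟨Fin.elim0, fun k => k.elim0⟩
  have Qdown : ∀ m n, n ≤ m → Q m → Q n := by
    rintro m n hnm ⟨us, hv⟩
    exact ⟨fun k => us (Fin.castLE hnm k), fun k l hkl i => hv _ _ (by simpa using hkl) i⟩
  have Qle : ∀ m, Q m → m ≤ r := by
    intro m hm
    by_contra hgt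
    exact noValid (Qdown m (r + 1) (by omega) hm)
  set m := Nat.findGreatest Q r with hm
  have hQm : Q m := Nat.findGreatest_spec (Nat.zero_le r) Q0
  obtain ⟨us, hval⟩ := hQm
  have hmr : m ≤ r := Qle m ⟨us, hval⟩
  -- the components of the us cover everything
  have hcover : (⋃ (k : Fin m) (i : Fin r), {v | (monoSub G c i).Reachable (us k) v})
      = Set.univ := by
    by_contra hne
    obtain ⟨v, hv⟩ : ∃ v, ∀ (k : Fin m) (i : Fin r), ¬ (monoSub G c i).Reachable (us k) v := by
      rcases Set.ne_univ_iff_exists_notMem _ |>.mp hne with ⟨v, hv⟩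
      exact ⟨v, by simpa using hv⟩
    have Qsucc : Q (m + 1) := by
      refine ⟨fun j => if h : (j : ℕ) < m then us ⟨j, h⟩ else v, ?_⟩
      intro k l hkl i
      have hkl' : (k : ℕ) < (l : ℕ) := hkl
      by_cases hl : (l : ℕ) < m
      · have hk : (k : ℕ) < m := hkl'.trans hl
        simpa [hk, hl] using hval ⟨k, hk⟩ ⟨l, hl⟩ hkl' i
      · have hk : (k : ℕ) < m := by omega
        simpa [hk, hl] using hv ⟨k, hk⟩ i
    have := Nat.findGreatest_is_greatest (Nat.lt_succ_self m) (Qle _ Qsucc)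
    exact this Qsucc
  -- build the cover
  refine ⟨m * r, ?_, ?_⟩
  · calc m * r ≤ r * r := Nat.mul_le_mul_right r hmr
    _ = r ^ 2 := (sq r).symm
  · set e := finProdFinEquiv (m := m) (n := r) with he
    refine ⟨fun j => {v | (monoSub G c ((e.symm j).2)).Reachable (us (e.symm j).1) v},
      fun j => (e.symm j).2, fun j => reach_induce_connected _ _, ?_⟩
    rw [Set.eq_univ_iff_forall]
    intro v
    have : v ∈ (⋃ (k : Fin m) (i : Fin r), {v | (monoSub G c i).Reachable (us k) v}) :=
      hcover ▸ Set.mem_univ v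
    simp only [Set.mem_iUnion] at this ⊢
    obtain ⟨k, i, hki⟩ := this
    exact ⟨e (k, i), by simpa using hki⟩
end

section
/- Let r ≥ 1 and n ≥ 2r+2. There exists a graph G on n vertices with minimum degree δ(G) = ⌈(r(n−r−1)+1)/(r+1)⌉ − 1 and an r-edge-coloring of G such that V(G) cannot be covered by the vertex sets of r or fewer monochromatic connected subgraphs (i.e., tc_r(G) > r). -/
open SimpleGraph

namespace S14

variable (r n : ℕ)

/-- The target minimum degree `⌈(r(n-r-1)+1)/(r+1)⌉ - 1`. -/
def DD : ℕ := (r * (n - r - 1) + r + 1) / (r + 1) - 1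

lemma DD_eq : (r * (n - r - 1) + 1 + (r + 1) - 1) / (r + 1) - 1 = DD r n := by
  have h : r * (n - r - 1) + 1 + (r + 1) - 1 = r * (n - r - 1) + r + 1 := by omega
  rw [DD, h]

/-- The part of a non-special vertex: part `0` is the big part of size `n - r - 1 - D`,
the vertices `x` with `n - D ≤ x` are distributed among parts `1,…,r` cyclically. -/
def pt (x : ℕ) : ℕ := if x < n - DD r n then 0 else (x - (n - DD r n)) % r + 1

/-- color of the edge from special vertex `v_j` to part `s`. -/
def vcol (j s : ℕ) : ℕ := if s < j then j - 1 else j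

/-- color of edges between parts `s` and `t`. -/
def wcol (s t : ℕ) : ℕ := if s = 0 then t else if t = 0 then s else 0

/-- the color of the edge between `x` and `y` (as a natural number). -/
def c2 (x y : ℕ) : ℕ :=
  if x < r + 1 then (if y < r + 1 then 0 else vcol x (pt r n y))
  else if y < r + 1 then vcol y (pt r n x)
  else wcol (pt r n x) (pt r n y)

/-- adjacency: special vertices (those `< r+1`) form an independent set, `v_j` is joined to
all parts except part `j`, parts `0` and `r` are not joined, everything else is joined. -/
def adj (x y : ℕ) : Prop :=
  if x < r + 1 then (if y < r + 1 then False else pt r n y ≠ x)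
  else if y < r + 1 then pt r n x ≠ y
  else ¬(pt r n x = 0 ∧ pt r n y = r) ∧ ¬(pt r n x = r ∧ pt r n y = 0)

instance decAdj : ∀ x y, Decidable (adj r n x y) := fun x y => by
  unfold adj; infer_instance

lemma adj_symm {x y : ℕ} (h : adj r n x y) : adj r n y x := by
  unfold adj at *; split_ifs at * <;> tauto

lemma c2_symm (x y : ℕ) : c2 r n x y = c2 r n y x := by
  unfold c2 wcol; split_ifs <;> first | rfl | omega

/-- The extremal graph. -/
def G : SimpleGraph (Fin n) where
  Adj x y := x ≠ y ∧ adj r n x.val y.val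
  symm := ⟨fun x y h => ⟨h.1.symm, adj_symm r n h.2⟩⟩
  loopless := ⟨fun x h => h.1 rfl⟩

instance decG : DecidableRel (G r n).Adj := fun x y =>
  decidable_of_iff (x ≠ y ∧ adj r n x.val y.val) Iff.rfl

/-- The coloring. -/
def cc (hr : 0 < r) : Sym2 (Fin n) → Fin r :=
  Sym2.lift ⟨fun x y => ⟨c2 r n x.val y.val % r, Nat.mod_lt _ hr⟩,
    fun x y => by apply Fin.ext; simp only; rw [c2_symm]⟩

lemma pt_le (hr : 0 < r) (x : ℕ) : pt r n x ≤ r := by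
  unfold pt; split_ifs
  · omega
  · have := Nat.mod_lt (x - (n - DD r n)) hr; omega

lemma pt_pos_iff (x : ℕ) : pt r n x ≠ 0 ↔ n - DD r n ≤ x := by
  unfold pt; split_ifs with h <;> simp <;> omega

/-- Label function: constant on monochromatic components of color `k`, and
injective on the special vertices. -/
def lab (k x : ℕ) : ℕ :=
  if x < r + 1 then (if x = k + 1 then 0 else if x = k then 1 else x + 2)
  else if pt r n x ≤ k then 0 else 1

lemma c2_lt (hr : 0 < r) {x y : Fin n} (hadj : (G r n).Adj x y) :
    c2 r n x.val y.val < r := by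
  obtain ⟨hne, ha⟩ := hadj
  have hpx := pt_le r n hr x.val
  have hpy := pt_le r n hr y.val
  unfold adj at ha
  unfold c2 vcol wcol
  split_ifs at ha ⊢ <;> first | exact ha.elim | omega

lemma pres (hr : 0 < r) {x y : Fin n} (hadj : (G r n).Adj x y) :
    lab r n (c2 r n x.val y.val) x.val = lab r n (c2 r n x.val y.val) y.val := by
  obtain ⟨hne, ha⟩ := hadj
  have hpx := pt_le r n hr x.val
  have hpy := pt_le r n hr y.val
  unfold adj at ha
  unfold c2 vcol wcol lab
  split_ifs at ha ⊢ <;> first | exact ha.elim | omega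

lemma lab_inj {k a b : ℕ} (ha : a < r + 1) (hb : b < r + 1)
    (h : lab r n k a = lab r n k b) : a = b := by
  unfold lab at h; split_ifs at h <;> omega

lemma walk_lab (hr : 0 < r) (k : Fin r) {a b : Fin n}
    (p : (monoSub (G r n) (cc r n hr) k).Walk a b) :
    lab r n k.val a.val = lab r n k.val b.val := by
  induction p with
  | nil => rfl
  | cons h p ih =>
    rename_i u v w
    obtain ⟨hG, hc⟩ := h
    have hlt : c2 r n u.val v.val < r := c2_lt r n hr hG
    have hval : c2 r n u.val v.val % r = k.val := congrArg Fin.val hc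
    rw [Nat.mod_eq_of_lt hlt] at hval
    have hp := pres r n hr hG
    rw [hval] at hp
    exact hp.trans ih

lemma reach_lab (hr : 0 < r) (k : Fin r) {a b : Fin n}
    (h : (monoSub (G r n) (cc r n hr) k).Reachable a b) :
    lab r n k.val a.val = lab r n k.val b.val := by
  obtain ⟨p⟩ := h; exact walk_lab r n hr k p

lemma induce_reach (H : SimpleGraph (Fin n)) (s : Set (Fin n)) (a b : Fin n)
    (ha : a ∈ s) (hb : b ∈ s) (h : (H.induce s).Connected) : H.Reachable a b := by
  have hre : (H.induce s).Reachable ⟨a, ha⟩ ⟨b, hb⟩ := h.preconnected _ _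
  exact hre.map (SimpleGraph.Embedding.induce s).toHom

lemma D_succ (hr : 1 ≤ r) : (r + 1) * (DD r n + 1) ≤ r * (n - r - 1) + r + 1 := by
  have h2 : 1 ≤ (r * (n - r - 1) + r + 1) / (r + 1) :=
    (Nat.one_le_div_iff (by omega)).mpr (by omega)
  have h3 : DD r n + 1 = (r * (n - r - 1) + r + 1) / (r + 1) := by rw [DD]; omega
  rw [h3, mul_comm]
  exact Nat.div_mul_le_self _ _

lemma D_mul (hr : 1 ≤ r) : r * DD r n + DD r n ≤ r * (n - r - 1) := by
  have := D_succ r n hr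
  rw [mul_add, mul_one, add_mul, one_mul] at this
  omega

lemma D_le_w (hr : 1 ≤ r) : DD r n ≤ n - r - 1 := by
  have h1 := D_mul r n hr
  by_contra hc
  push_neg at hc
  have h3 : r * (n - r - 1) ≤ r * DD r n := Nat.mul_le_mul_left r (by omega)
  omega

lemma A_le (hr : 1 ≤ r) (hn : 2 * r + 2 ≤ n) :
    (DD r n - 1) / r + 1 ≤ (n - r - 1) - DD r n := by
  have h1 := D_mul r n hr
  have h2 := D_le_w r n hr
  have h3 : r * ((n - r - 1) - DD r n) + r * DD r n = r * (n - r - 1) := by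
    rw [← Nat.mul_add]; congr 1; omega
  have h4 : r * ((DD r n - 1) / r) ≤ DD r n - 1 := by
    rw [mul_comm]; exact Nat.div_mul_le_self _ _
  by_contra hc
  push_neg at hc
  have h5 : r * ((n - r - 1) - DD r n) ≤ r * ((DD r n - 1) / r) :=
    Nat.mul_le_mul_left r (by omega)
  rcases Nat.eq_zero_or_pos (DD r n) with h0 | h0
  · rw [h0] at hc
    simp [Nat.zero_div] at hc
    omega
  · omega

lemma card_tail (a : ℕ) :
    (Finset.univ.filter (fun y : Fin n => a ≤ y.val)).card = n - a := by
  have himg : (Finset.univ.filter (fun y : Fin n => a ≤ y.val)).image Fin.val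
      = Finset.Ico a n := by
    ext k
    simp only [Finset.mem_image, Finset.mem_filter, Finset.mem_univ, true_and, Finset.mem_Ico]
    constructor
    · rintro ⟨y, hy, rfl⟩; exact ⟨hy, y.isLt⟩
    · rintro ⟨h1, h2⟩; exact ⟨⟨k, h2⟩, h1, rfl⟩
  have hc := Finset.card_image_of_injective
    (Finset.univ.filter (fun y : Fin n => a ≤ y.val)) Fin.val_injective
  rw [himg] at hc
  rw [← hc, Nat.card_Ico]

lemma card_bound_of_lt (P : Fin n → Prop) [DecidablePred P] (a : ℕ)
    (h : ∀ y, P y → y.val < a) : (Finset.univ.filter P).card ≤ a := by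
  have := Finset.card_le_card_of_injOn (f := Fin.val)
    (s := Finset.univ.filter P) (t := Finset.range a)
    (fun y hy => by
      simp only [Finset.mem_coe, Finset.mem_range]
      exact h y (Finset.mem_filter.mp hy).2)
    (Fin.val_injective.injOn)
  simpa using this

lemma card_eqval (s : ℕ) :
    (Finset.univ.filter (fun y : Fin n => y.val = s)).card ≤ 1 := by
  apply Finset.card_le_one.mpr
  intro a ha b hb
  simp only [Finset.mem_filter] at ha hb
  exact Fin.ext (ha.2.trans hb.2.symm)

lemma card_mid (a b : ℕ) :
    (Finset.univ.filter (fun y : Fin n => a ≤ y.val ∧ y.val < b)).card ≤ b - a := by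
  have := Finset.card_le_card_of_injOn (f := Fin.val)
    (s := Finset.univ.filter (fun y : Fin n => a ≤ y.val ∧ y.val < b))
    (t := Finset.Ico a b)
    (fun y hy => by
      have := (Finset.mem_filter.mp hy).2
      simp only [Finset.mem_coe, Finset.mem_Ico]; exact this)
    (Fin.val_injective.injOn)
  simpa [Nat.card_Ico] using this

lemma card_P (D j : ℕ) (hD : D ≤ n) :
    (Finset.univ.filter
      (fun y : Fin n => n - D ≤ y.val ∧ (y.val - (n - D)) % r = j)).card
      ≤ (D - 1) / r + 1 := by
  have hmain := Finset.card_le_card_of_injOn (f := fun y : Fin n => (y.val - (n - D)) / r)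
    (s := Finset.univ.filter
      (fun y : Fin n => n - D ≤ y.val ∧ (y.val - (n - D)) % r = j))
    (t := Finset.range ((D - 1) / r + 1)) ?_ ?_
  · simpa using hmain
  · intro y hy
    have hy2 := (Finset.mem_filter.mp hy).2
    have hyn := y.isLt
    simp only [Finset.mem_coe, Finset.mem_range]
    exact Nat.lt_succ_of_le (Nat.div_le_div_right (by omega))
  · intro y hy y' hy' hq
    simp only [Finset.coe_filter, Set.mem_setOf_eq] at hy hy'
    have e1 := Nat.div_add_mod (y.val - (n - D)) r
    have e2 := Nat.div_add_mod (y'.val - (n - D)) r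
    have hq' : (y.val - (n - D)) / r = (y'.val - (n - D)) / r := hq
    rw [← hq'] at e2
    rw [hy.2.2] at e1
    rw [hy'.2.2] at e2
    have : y.val = y'.val := by omega
    exact Fin.ext this

end S14

/-- Example: for n ≥ 2r+2 there is a graph on n vertices with minimum degree exactly
⌈(r(n−r−1)+1)/(r+1)⌉ − 1 and an r-coloring with no cover by r monochromatic connected
subgraphs, i.e. tc_r(G) > r.  Here the ceiling ⌈a/b⌉ is written (a + b - 1)/b in ℕ. -/
theorem stmt14 (r n : ℕ) (hr : 1 ≤ r) (hn : 2 * r + 2 ≤ n) :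
    ∃ G : SimpleGraph (Fin n),
      (∀ v : Fin n, (r * (n - r - 1) + 1 + (r + 1) - 1) / (r + 1) - 1 ≤ {w | G.Adj v w}.ncard) ∧
      (∃ v : Fin n, {w | G.Adj v w}.ncard = (r * (n - r - 1) + 1 + (r + 1) - 1) / (r + 1) - 1) ∧
      ∃ c : Sym2 (Fin n) → Fin r, ¬ HasMonoCover G c r := by
  have hr0 : 0 < r := hr
  -- global arithmetic facts
  have hDw : S14.DD r n ≤ n - r - 1 := S14.D_le_w r n hr
  have hA : (S14.DD r n - 1) / r + 1 ≤ (n - r - 1) - S14.DD r n := S14.A_le r n hr hn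
  have hDn : S14.DD r n ≤ n := by omega
  have htail : r + 1 ≤ n - S14.DD r n := by omega
  have hset : ∀ v : Fin n, {w | (S14.G r n).Adj v w}
      = ↑(Finset.univ.filter (fun y => (S14.G r n).Adj v y)) := by
    intro v; ext w; simp
  refine ⟨S14.G r n, ?_, ?_, ⟨S14.cc r n hr0, ?_⟩⟩
  · -- minimum degree lower bound
    intro v
    rw [S14.DD_eq, hset v, Set.ncard_coe_finset]
    have hcompl := Finset.card_filter_add_card_filter_not
      (s := (Finset.univ : Finset (Fin n))) (p := fun y => (S14.G r n).Adj v y)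
    rw [Finset.card_univ, Fintype.card_fin] at hcompl
    suffices hB : (Finset.univ.filter (fun y => ¬ (S14.G r n).Adj v y)).card ≤ n - S14.DD r n by
      omega
    by_cases hv : v.val < r + 1
    · by_cases hv0 : v.val = 0
      · -- v = v₀ : non-neighbors are exactly the vertices with value < n - D
        refine le_trans (Finset.card_le_card ?_) (S14.card_bound_of_lt n _ (n - S14.DD r n)
          (fun y hy => hy))
        intro y hy
        simp only [Finset.mem_filter, Finset.mem_univ, true_and] at hy ⊢
        by_cases hvy : v = y
        · subst hvy; omega
        · have hna : ¬ S14.adj r n v.val y.val := fun h => hy ⟨hvy, h⟩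
          rw [hv0] at hna
          unfold S14.adj at hna
          rw [if_pos (by omega : (0:ℕ) < r + 1)] at hna
          by_cases hy1 : y.val < r + 1
          · omega
          · rw [if_neg hy1] at hna
            have := (S14.pt_pos_iff r n y.val).not.mp (by tauto)
            omega
      · -- v = v_j, j ≥ 1: non-neighbors ⊆ specials ∪ part j
        have hsub : (Finset.univ.filter (fun y => ¬ (S14.G r n).Adj v y))
            ⊆ (Finset.univ.filter (fun y : Fin n => y.val < r + 1))
              ∪ (Finset.univ.filter (fun y : Fin n =>
                  n - S14.DD r n ≤ y.val ∧ (y.val - (n - S14.DD r n)) % r = v.val - 1)) := by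
          intro y hy
          simp only [Finset.mem_filter, Finset.mem_univ, true_and, Finset.mem_union] at hy ⊢
          by_cases hvy : v = y
          · subst hvy; left; exact hv
          · have hna : ¬ S14.adj r n v.val y.val := fun h => hy ⟨hvy, h⟩
            unfold S14.adj at hna
            rw [if_pos hv] at hna
            by_cases hy1 : y.val < r + 1
            · left; exact hy1
            · rw [if_neg hy1] at hna
              have hpt : S14.pt r n y.val = v.val := by tauto
              right
              unfold S14.pt at hpt
              split_ifs at hpt with hcase
              · omega
              · constructor
                · omega
                · omega
        refine le_trans (Finset.card_le_card hsub) (le_trans (Finset.card_union_le _ _) ?_)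
        have h1 := S14.card_bound_of_lt n (fun y : Fin n => y.val < r + 1) (r + 1)
          (fun y hy => hy)
        have h2 := S14.card_P r n (S14.DD r n) (v.val - 1) hDn
        omega
    · -- v is a part vertex
      set s := S14.pt r n v.val with hs
      have hsle := S14.pt_le r n hr0 v.val
      -- non-neighbors ⊆ {v} ∪ {special vertex s} ∪ (forbidden partner part)
      by_cases hs0 : s = 0
      · have hsub : (Finset.univ.filter (fun y => ¬ (S14.G r n).Adj v y))
            ⊆ ({v} : Finset (Fin n))
              ∪ (Finset.univ.filter (fun y : Fin n => y.val = s))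
              ∪ (Finset.univ.filter (fun y : Fin n =>
                  n - S14.DD r n ≤ y.val ∧ (y.val - (n - S14.DD r n)) % r = r - 1)) := by
          intro y hy
          simp only [Finset.mem_filter, Finset.mem_univ, true_and, Finset.mem_union,
            Finset.mem_singleton] at hy ⊢
          by_cases hvy : v = y
          · left; left; exact hvy.symm
          · have hna : ¬ S14.adj r n v.val y.val := fun h => hy ⟨hvy, h⟩
            unfold S14.adj at hna
            rw [if_neg hv] at hna
            by_cases hy1 : y.val < r + 1
            · rw [if_pos hy1] at hna
              left; right; omega
            · rw [if_neg hy1] at hna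
              have hna2 : (S14.pt r n v.val = 0 ∧ S14.pt r n y.val = r) ∨
                  (S14.pt r n v.val = r ∧ S14.pt r n y.val = 0) := by tauto
              rcases hna2 with ⟨h01, h02⟩ | ⟨h01, h02⟩
              · -- pt y = r
                right
                have hptpos : S14.pt r n y.val ≠ 0 := by omega
                have hge := (S14.pt_pos_iff r n y.val).mp hptpos
                refine ⟨hge, ?_⟩
                unfold S14.pt at h02
                split_ifs at h02 with hcase
                · omega
                · omega
              · omega
        refine le_trans (Finset.card_le_card hsub) (le_trans (Finset.card_union_le _ _) ?_)
        have h2 := S14.card_P r n (S14.DD r n) (r - 1) hDn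
        have h3 := S14.card_eqval n s
        have h4 : (({v} : Finset (Fin n)) ∪ (Finset.univ.filter (fun y : Fin n => y.val = s))).card
            ≤ 1 + 1 := le_trans (Finset.card_union_le _ _)
              (by simp only [Finset.card_singleton]; omega)
        omega
      · by_cases hsr : s = r
        · have hsub : (Finset.univ.filter (fun y => ¬ (S14.G r n).Adj v y))
              ⊆ ({v} : Finset (Fin n))
                ∪ (Finset.univ.filter (fun y : Fin n => y.val = s))
                ∪ (Finset.univ.filter (fun y : Fin n =>
                    r + 1 ≤ y.val ∧ y.val < n - S14.DD r n)) := by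
            intro y hy
            simp only [Finset.mem_filter, Finset.mem_univ, true_and, Finset.mem_union,
              Finset.mem_singleton] at hy ⊢
            by_cases hvy : v = y
            · left; left; exact hvy.symm
            · have hna : ¬ S14.adj r n v.val y.val := fun h => hy ⟨hvy, h⟩
              unfold S14.adj at hna
              rw [if_neg hv] at hna
              by_cases hy1 : y.val < r + 1
              · rw [if_pos hy1] at hna
                left; right; omega
              · rw [if_neg hy1] at hna
                have hna2 : (S14.pt r n v.val = 0 ∧ S14.pt r n y.val = r) ∨
                    (S14.pt r n v.val = r ∧ S14.pt r n y.val = 0) := by tauto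
                rcases hna2 with ⟨h01, h02⟩ | ⟨h01, h02⟩
                · omega
                · -- pt y = 0
                  right
                  have := (S14.pt_pos_iff r n y.val).not.mp (by omega)
                  omega
          refine le_trans (Finset.card_le_card hsub) (le_trans (Finset.card_union_le _ _) ?_)
          have h2 := S14.card_mid n (r + 1) (n - S14.DD r n)
          have h3 := S14.card_eqval n s
          have h4 : (({v} : Finset (Fin n)) ∪ (Finset.univ.filter (fun y : Fin n => y.val = s))).card
              ≤ 1 + 1 := le_trans (Finset.card_union_le _ _)
              (by simp only [Finset.card_singleton]; omega)
          omega
        · -- middle part: only v itself and v_s are non-neighbors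
          have hsub : (Finset.univ.filter (fun y => ¬ (S14.G r n).Adj v y))
              ⊆ ({v} : Finset (Fin n))
                ∪ (Finset.univ.filter (fun y : Fin n => y.val = s)) := by
            intro y hy
            simp only [Finset.mem_filter, Finset.mem_univ, true_and, Finset.mem_union,
              Finset.mem_singleton] at hy ⊢
            by_cases hvy : v = y
            · left; exact hvy.symm
            · have hna : ¬ S14.adj r n v.val y.val := fun h => hy ⟨hvy, h⟩
              unfold S14.adj at hna
              rw [if_neg hv] at hna
              by_cases hy1 : y.val < r + 1
              · rw [if_pos hy1] at hna
                right; omega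
              · rw [if_neg hy1] at hna
                have hna2 : (S14.pt r n v.val = 0 ∧ S14.pt r n y.val = r) ∨
                    (S14.pt r n v.val = r ∧ S14.pt r n y.val = 0) := by tauto
                rcases hna2 with ⟨h01, h02⟩ | ⟨h01, h02⟩ <;> omega
          refine le_trans (Finset.card_le_card hsub) (le_trans (Finset.card_union_le _ _) ?_)
          have h3 := S14.card_eqval n s
          have h5 : ({v} : Finset (Fin n)).card = 1 := Finset.card_singleton v
          omega
  · -- vertex of degree exactly D : v₀
    refine ⟨⟨0, by omega⟩, ?_⟩
    rw [S14.DD_eq, hset _, Set.ncard_coe_finset]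
    have heq : (Finset.univ.filter (fun y => (S14.G r n).Adj ⟨0, by omega⟩ y))
        = Finset.univ.filter (fun y : Fin n => n - S14.DD r n ≤ y.val) := by
      ext y
      simp only [Finset.mem_filter, Finset.mem_univ, true_and]
      constructor
      · rintro ⟨hne, ha⟩
        unfold S14.adj at ha
        rw [if_pos (by omega : (0:ℕ) < r + 1)] at ha
        by_cases hy1 : y.val < r + 1
        · rw [if_pos hy1] at ha; exact ha.elim
        · rw [if_neg hy1] at ha
          exact (S14.pt_pos_iff r n y.val).mp ha
      · intro hge
        constructor
        · intro h
          have : y.val = 0 := by rw [← h]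
          omega
        · unfold S14.adj
          rw [if_pos (by omega : (0:ℕ) < r + 1), if_neg (by omega : ¬ y.val < r + 1)]
          exact (S14.pt_pos_iff r n y.val).mpr hge
    rw [heq, S14.card_tail n (n - S14.DD r n)]
    omega
  · -- no cover by r monochromatic connected subgraphs
    rintro ⟨t, ht, f, col, hconn, hcover⟩
    have hvi : ∀ i : Fin (r + 1), ∃ j, (⟨i.val, by omega⟩ : Fin n) ∈ f j := by
      intro i
      exact Set.mem_iUnion.mp (Set.eq_univ_iff_forall.mp hcover _)
    choose J hJ using hvi
    have hcard : Fintype.card (Fin t) < Fintype.card (Fin (r + 1)) := by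
      simp only [Fintype.card_fin]; omega
    obtain ⟨i, i', hne, hJeq⟩ := Fintype.exists_ne_map_eq_of_card_lt J hcard
    have hbmem : (⟨i'.val, by omega⟩ : Fin n) ∈ f (J i) := by rw [hJeq]; exact hJ i'
    have hre : (monoSub (S14.G r n) (S14.cc r n hr0) (col (J i))).Reachable
        ⟨i.val, by omega⟩ ⟨i'.val, by omega⟩ :=
      S14.induce_reach n _ (f (J i)) _ _ (hJ i) hbmem (hconn (J i))
    have hlab := S14.reach_lab r n hr0 (col (J i)) hre
    have hval : i.val = i'.val :=
      S14.lab_inj r n (by omega : i.val < r + 1) (by omega : i'.val < r + 1) hlab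
    exact hne (Fin.ext hval)
end
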